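/- If p and q are unit quaternions with p i p* = q i q*, then p λ p* = q λ q* for every unit complex number λ (regarded as a quaternion of the form a + b·i with a² + b² = 1). Consequently the map 𝔮 : S² × S¹ → Sp₁ defined by 𝔮(z, λ) = q λ q*, where q is any unit quaternion with z = q i q*, is well defined. -/
import Mathlib


open Quaternion

/-- The quaternion `i`. -/
def quatI : ℍ[ℝ] := ⟨0, 1, 0, 0⟩

/-- If `p` and `q` are unit quaternions with `p i p* = q i q*`, then
`p λ p* = q λ q*` for every unit complex number `λ = a + b·i` (with
`a² + b² = 1`), so the map `𝔮(z, λ) = q λ q*` (where `z = q i q*`) is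
well defined. -/
theorem frakq_well_defined (p q : ℍ[ℝ]) (hp : ‖p‖ = 1) (hq : ‖q‖ = 1)
    (h : p * quatI * star p = q * quatI * star q)
    (a b : ℝ) (hab : a ^ 2 + b ^ 2 = 1) :
    p * ((a : ℍ[ℝ]) + b • quatI) * star p = q * ((a : ℍ[ℝ]) + b • quatI) * star q := by
  have np : p * star p = 1 := by
    rw [Quaternion.self_mul_star]
    have : Quaternion.normSq p = 1 := by
      rw [Quaternion.normSq_eq_norm_mul_self, hp]; norm_num
    rw [this]; norm_num
  have nq : q * star q = 1 := by
    rw [Quaternion.self_mul_star]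
    have : Quaternion.normSq q = 1 := by
      rw [Quaternion.normSq_eq_norm_mul_self, hq]; norm_num
    rw [this]; norm_num
  have key : ∀ r : ℍ[ℝ], r * star r = 1 →
      r * ((a : ℍ[ℝ]) + b • quatI) * star r
        = (a : ℍ[ℝ]) + b • (r * quatI * star r) := by
    intro r hr
    rw [mul_add, add_mul, mul_smul_comm, smul_mul_assoc]
    rw [← Quaternion.coe_commutes, mul_assoc, hr, mul_one]
  rw [key p np, key q nq, h]
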